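/- Suppose C ⊆ U ⊆ ℝⁿ, where U is open and C is relatively closed in U. If the tangent cone Tan(C, x) equals all of ℝⁿ for every x ∈ C, and C is nonempty and U is connected, then C = U. -/
import Mathlib

open scoped RealInnerProductSpace

/-- Tangent cone of a set `C` at a point `x`. -/
def tanCone {n : ℕ} (C : Set (EuclideanSpace ℝ (Fin n))) (x : EuclideanSpace ℝ (Fin n)) :
    Set (EuclideanSpace ℝ (Fin n)) :=
  {v | ∀ ε > (0 : ℝ), ∃ y ∈ C, ∃ r : ℝ, 0 < r ∧ ‖y - x‖ < ε ∧ ‖r • (y - x) - v‖ < ε}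

lemma tanCone_open {n : ℕ} (U C : Set (EuclideanSpace ℝ (Fin n)))
    (hCU : C ⊆ U) (hU : IsOpen U) (hC : C = U ∩ closure C)
    (htan : ∀ x ∈ C, tanCone C x = Set.univ) : IsOpen C := by
  rw [Metric.isOpen_iff]
  intro x hx
  obtain ⟨δ, hδ, hball⟩ := Metric.isOpen_iff.mp hU x (hCU hx)
  refine ⟨δ / 4, by positivity, fun z hz => ?_⟩
  by_contra hzC
  -- the compact set
  set K : Set (EuclideanSpace ℝ (Fin n)) := Metric.closedBall x (δ / 2) ∩ closure C with hK
  have hKU : K ⊆ U := fun y hy =>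
    hball (lt_of_le_of_lt (Metric.mem_closedBall.mp hy.1) (by linarith))
  have hKC : K ⊆ C := fun y hy => hC ▸ ⟨hKU hy, hy.2⟩
  have hKcompact : IsCompact K := (isCompact_closedBall x (δ / 2)).inter_right isClosed_closure
  have hxK : x ∈ K := ⟨Metric.mem_closedBall.mpr (by rw [dist_self]; positivity), subset_closure hx⟩
  obtain ⟨x₀, hx₀K, hmin⟩ := hKcompact.exists_isMinOn ⟨x, hxK⟩
    ((continuous_const.dist continuous_id).continuousOn (s := K) (f := fun y => dist z y))
  have hx₀C : x₀ ∈ C := hKC hx₀K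
  have hdzx : dist z x < δ / 4 := Metric.mem_ball.mp hz
  have hdzx₀ : dist z x₀ ≤ dist z x := hmin hxK
  have hx₀x : dist x₀ x < δ / 2 := by
    calc dist x₀ x ≤ dist x₀ z + dist z x := dist_triangle _ _ _
    _ < δ / 4 + δ / 4 := by rw [dist_comm]; linarith [hdzx₀.trans_lt hdzx]
    _ = δ / 2 := by ring
  set η : ℝ := δ / 2 - dist x₀ x with hη
  have hηpos : 0 < η := by simp only [hη]; linarith
  set d : ℝ := dist z x₀ with hd
  have hdpos : 0 < d := dist_pos.mpr (fun h => hzC (h ▸ hx₀C))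
  set v : EuclideanSpace ℝ (Fin n) := z - x₀ with hv
  have hvnorm : ‖v‖ = d := by rw [hv, hd, dist_eq_norm]
  have hvtan : v ∈ tanCone C x₀ := by rw [htan x₀ hx₀C]; trivial
  set ε : ℝ := min η (d / 2) with hε
  have hεpos : 0 < ε := lt_min hηpos (by positivity)
  obtain ⟨y, hyC, r, hr, hynear, hwnear⟩ := hvtan ε hεpos
  -- y is in K
  have hyK : y ∈ K := by
    refine ⟨Metric.mem_closedBall.mpr ?_, subset_closure hyC⟩
    have : dist y x₀ < η := by
      rw [dist_eq_norm]; exact hynear.trans_le (min_le_left _ _)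
    calc dist y x ≤ dist y x₀ + dist x₀ x := dist_triangle _ _ _
    _ ≤ η + dist x₀ x := by linarith
    _ = δ / 2 := by simp [hη]
  have hdzy : d ≤ dist z y := hmin hyK
  -- key inner product inequality from minimality
  have hkey : 2 * ⟪v, y - x₀⟫ ≤ ‖y - x₀‖ ^ 2 := by
    have h1 : ‖v‖ ^ 2 ≤ ‖v - (y - x₀)‖ ^ 2 := by
      have : v - (y - x₀) = z - y := by rw [hv]; abel
      rw [this, hvnorm]
      have hzy : ‖z - y‖ = dist z y := (dist_eq_norm z y).symm
      rw [hzy]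
      exact pow_le_pow_left₀ hdpos.le hdzy 2
    have h2 : ‖v - (y - x₀)‖ ^ 2 = ‖v‖ ^ 2 - 2 * ⟪v, y - x₀⟫ + ‖y - x₀‖ ^ 2 := by
      rw [norm_sub_sq_real]
    nlinarith
  set w : EuclideanSpace ℝ (Fin n) := r • (y - x₀) with hw
  have hwv : ‖w - v‖ < ε := hwnear
  have hwnorm : ‖w‖ = r * ‖y - x₀‖ := by
    rw [hw, norm_smul, Real.norm_eq_abs, abs_of_pos hr]
  -- upper bound on ⟪v, w⟫
  have hub : ⟪v, w⟫ ≤ ‖w‖ * ‖y - x₀‖ / 2 := by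
    rw [hw, real_inner_smul_right, hwnorm]
    nlinarith [hkey, hr, sq_nonneg (‖y - x₀‖)]
  -- lower bound on ⟪v, w⟫
  have hlb : d ^ 2 - d * ε ≤ ⟪v, w⟫ := by
    have h1 : ⟪v, w⟫ = ⟪v, v⟫ + ⟪v, w - v⟫ := by
      rw [← inner_add_right]; congr 1; abel
    have h2 : -(‖v‖ * ‖w - v‖) ≤ ⟪v, w - v⟫ := neg_le_of_abs_le (abs_real_inner_le_norm v (w - v))
    have h3 : ⟪v, v⟫ = d ^ 2 := by rw [real_inner_self_eq_norm_sq, hvnorm]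
    have h4 : ‖v‖ * ‖w - v‖ ≤ d * ε := by
      rw [hvnorm]
      exact mul_le_mul_of_nonneg_left hwv.le hdpos.le
    linarith
  have hwle : ‖w‖ ≤ d + ε := by
    calc ‖w‖ ≤ ‖v‖ + ‖w - v‖ := by
          have := norm_add_le v (w - v)
          have h : v + (w - v) = w := by abel
          rwa [h] at this
    _ ≤ d + ε := by rw [hvnorm]; linarith
  have hεd : ε ≤ d / 2 := min_le_right _ _
  have hyε : ‖y - x₀‖ ≤ ε := hynear.le
  have hwnn : 0 ≤ ‖w‖ := norm_nonneg _
  nlinarith [hub, hlb, hwle, hεd, hyε, hdpos, hεpos]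

theorem stmt_1 {n : ℕ} (U C : Set (EuclideanSpace ℝ (Fin n)))
    (hCU : C ⊆ U) (hU : IsOpen U) (hC : C = U ∩ closure C)
    (htan : ∀ x ∈ C, tanCone C x = Set.univ)
    (hne : C.Nonempty) (hconn : IsConnected U) :
    C = U := by
  have hCopen : IsOpen C := tanCone_open U C hCU hU hC htan
  apply Set.Subset.antisymm hCU
  intro u hu
  by_contra huc
  have hucl : u ∉ closure C := fun h => huc (by rw [hC]; exact ⟨hu, h⟩)
  obtain ⟨c, hc⟩ := hne
  obtain ⟨p, hpU, hpC, hpcl⟩ := hconn.isPreconnected C (closure C)ᶜ hCopen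
    isClosed_closure.isOpen_compl
    (fun y hy => by
      by_cases h : y ∈ closure C
      · exact Or.inl (by rw [hC]; exact ⟨hy, h⟩)
      · exact Or.inr h)
    ⟨c, hCU hc, hc⟩ ⟨u, hu, hucl⟩
  exact hpcl (subset_closure hpC)
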